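/- Farthest-point insertion step invariant: let P be a finite set of points in a metric space, and suppose centers c_1,…,c_{k+1} are chosen greedily so that each c_{m+1} ∈ P maximizes the distance to {c_1,…,c_m}. Let r be the distance from c_{k+1} to {c_1,…,c_k}. Then any two of the points c_1,…,c_{k+1} are at distance at least r from each other. -/

import Mathlib

open Finset Metric

theorem farthest_point_insertion_separation
    {X : Type*} [MetricSpace X] [DecidableEq X] (P : Finset X) (hP : P.Nonempty) (k : ℕ)
    (c : ℕ → X) (hmem : ∀ m ≤ k + 1, c m ∈ P)
    (hgreedy : ∀ m ≤ k, ∀ x ∈ P,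
      Metric.infDist x (↑((Finset.range (m + 1)).image c) : Set X) ≤
        Metric.infDist (c (m + 1)) (↑((Finset.range (m + 1)).image c) : Set X))
    (r : ℝ)
    (hr : r = Metric.infDist (c (k + 1)) (↑((Finset.range (k + 1)).image c) : Set X)) :
    ∀ i ≤ k + 1, ∀ j ≤ k + 1, i ≠ j → r ≤ dist (c i) (c j) := by
  set d : ℕ → ℝ := fun m => Metric.infDist (c m) (↑((Finset.range m).image c) : Set X) with hd
  have hstep : ∀ m, 1 ≤ m → m ≤ k → d (m + 1) ≤ d m := by
    intro m hm1 hmk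
    obtain ⟨m', rfl⟩ : ∃ m', m = m' + 1 := ⟨m - 1, by omega⟩
    have h1 := hgreedy m' (by omega) (c (m' + 2)) (hmem (m' + 2) (by omega))
    have h2 : Metric.infDist (c (m' + 2)) (↑((Finset.range (m' + 2)).image c) : Set X) ≤
        Metric.infDist (c (m' + 2)) (↑((Finset.range (m' + 1)).image c) : Set X) := by
      apply Metric.infDist_le_infDist_of_subset
      · intro x hx
        simp only [Finset.coe_image, Set.mem_image] at hx ⊢
        obtain ⟨a, ha, rfl⟩ := hx
        exact ⟨a, by simp at ha ⊢; omega, rfl⟩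
      · refine ⟨c 0, ?_⟩
        simp only [Finset.coe_image, Set.mem_image]
        exact ⟨0, by simp, rfl⟩
    exact h2.trans h1
  have hmono : ∀ j, 1 ≤ j → j ≤ k + 1 → d (k + 1) ≤ d j := by
    intro j hj1 hjk
    have : ∀ b, j ≤ b → b ≤ k + 1 → d b ≤ d j := by
      intro b
      induction b with
      | zero => intro h1 h2; omega
      | succ n ih =>
        intro h1 h2
        rcases Nat.lt_or_ge j (n + 1) with h | h
        · have := ih (by omega) (by omega)
          exact (hstep n (by omega) (by omega)).trans this
        · have : j = n + 1 := by omega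
          subst this; exact le_refl _
    exact this (k + 1) hjk le_rfl
  have key : ∀ i j, i < j → j ≤ k + 1 → r ≤ dist (c i) (c j) := by
    intro i j hij hjk
    have hle : d j ≤ dist (c j) (c i) := by
      apply Metric.infDist_le_dist_of_mem
      simp only [Finset.coe_image, Set.mem_image]
      exact ⟨i, by simpa using hij, rfl⟩
    have := (hmono j (by omega) hjk).trans hle
    rw [hr, dist_comm]
    exact this
  intro i hi j hj hij
  rcases Nat.lt_or_ge i j with h | h
  · exact key i j h hj
  · rw [dist_comm]; exact key j i (by omega) hi
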